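/- For every field k and group G, the map Φ : k[G] → R(k,G) sending Σ_g α(g)·g to Σ_g α(g)·X_g is injective, additive, multiplicative (Φ(ab) = Φ(a) ⋆ Φ(b)), and sends 1 to X_{1_G}; i.e., it is an embedding of k[G] into the near-ring R(k,G). -/

import Mathlib

open MvPolynomial

/-- The multiplication `⋆` on `R(k,G) = k[X_g : g ∈ G]`. -/
noncomputable def RkGmul {k : Type} [Field k] {G : Type} [Group G]
    (α β : MvPolynomial G k) : MvPolynomial G k :=
  MvPolynomial.aeval (fun g : G => MvPolynomial.rename (fun h : G => g * h) β) α

/-- The canonical map `Φ : k[G] → R(k,G)`, `Σ_g α(g)·g ↦ Σ_g α(g)·X_g`. -/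
noncomputable def PhiRkG {k : Type} [Field k] {G : Type} [Group G]
    (a : MonoidAlgebra k G) : MvPolynomial G k :=
  a.coeff.sum fun g c => MvPolynomial.C c * MvPolynomial.X g

variable {k : Type} [Field k] {G : Type} [Group G]

lemma PhiRkG_single (g : G) (c : k) :
    PhiRkG (MonoidAlgebra.single g c) = C c * X g := by
  simp [PhiRkG, Finsupp.sum_single_index]

lemma PhiRkG_zero : PhiRkG (0 : MonoidAlgebra k G) = 0 := by
  simp [PhiRkG]

lemma PhiRkG_add (a b : MonoidAlgebra k G) :
    PhiRkG (a + b) = PhiRkG a + PhiRkG b := by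
  classical
  unfold PhiRkG
  rw [MonoidAlgebra.coeff_add, Finsupp.sum_add_index]
  · intro g _; simp
  · intro g _ c d; rw [map_add]; ring

lemma PhiRkG_coeff (a : MonoidAlgebra k G) (g : G) :
    MvPolynomial.coeff (Finsupp.single g 1) (PhiRkG a) = a.coeff g := by
  classical
  unfold PhiRkG
  rw [Finsupp.sum, MvPolynomial.coeff_sum]
  rw [Finset.sum_eq_single g]
  · by_cases h : g ∈ a.coeff.support
    · simp [MvPolynomial.coeff_X']
    · simp [Finsupp.notMem_support_iff.mp h, MvPolynomial.coeff_X']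
  · intro h _ hne
    have : ¬ (Finsupp.single h (1:ℕ) = Finsupp.single g 1) := by
      intro he
      exact hne (Finsupp.single_left_injective one_ne_zero he)
    simp [MvPolynomial.coeff_X', this]
  · intro h
    simp [Finsupp.notMem_support_iff.mp h]

/-- `Φ` is an embedding of near-rings: injective, additive, multiplicative,
and it sends `1` to `X_{1_G}`. -/
theorem PhiRkG_embedding {k : Type} [Field k] {G : Type} [Group G] :
    Function.Injective (PhiRkG (k := k) (G := G)) ∧
    (∀ a b : MonoidAlgebra k G, PhiRkG (a + b) = PhiRkG a + PhiRkG b) ∧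
    (∀ a b : MonoidAlgebra k G, PhiRkG (a * b) = RkGmul (PhiRkG a) (PhiRkG b)) ∧
    PhiRkG (1 : MonoidAlgebra k G) = MvPolynomial.X (1 : G) := by
  refine ⟨?_, PhiRkG_add, ?_, ?_⟩
  · intro a b h
    ext g
    have := PhiRkG_coeff a g
    rw [h, PhiRkG_coeff] at this
    exact this.symm
  · intro a b
    induction a using MonoidAlgebra.induction_linear with
    | zero => simp [PhiRkG_zero, RkGmul]
    | add a a' ha ha' =>
        rw [add_mul, PhiRkG_add, ha, ha', PhiRkG_add]
        simp [RkGmul, map_add]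
    | single g c =>
        induction b using MonoidAlgebra.induction_linear with
        | zero => simp [PhiRkG_zero, PhiRkG_single, RkGmul]
        | add b b' hb hb' =>
            rw [mul_add, PhiRkG_add, hb, hb', PhiRkG_add]
            simp only [RkGmul, PhiRkG_single, map_add, map_mul, aeval_X, aeval_C]
            ring
        | single h d =>
            rw [MonoidAlgebra.single_mul_single, PhiRkG_single, PhiRkG_single,
              PhiRkG_single]
            simp [RkGmul, algebraMap_eq, mul_assoc]
  · rw [MonoidAlgebra.one_def, PhiRkG_single]
    simp
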